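/- Let n ≥ 0 and let c₀, c₁, …, c_n ∈ ℂ, not all zero. Let T be a tempered distribution on ℝ satisfying c₀ T + c₁ T' + ⋯ + c_n T^{(n)} = 0, and suppose T has zero past, i.e., ⟨T, φ⟩ = 0 for every Schwartz function φ ∈ 𝓢(ℝ, ℂ) whose support is contained in (−∞, 0). Then T = 0. -/

import Mathlib

/-- The distributional derivative of a tempered distribution on ℝ:
`⟨T', φ⟩ = −⟨T, φ'⟩`. -/
noncomputable def distDeriv (T : SchwartzMap ℝ ℂ →L[ℂ] ℂ) : SchwartzMap ℝ ℂ →L[ℂ] ℂ :=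
  -(T.comp (SchwartzMap.derivCLM ℂ ℂ))

namespace TempAux

open SchwartzMap Polynomial Set
open scoped ContDiff

noncomputable abbrev SD := SchwartzMap ℝ ℂ

lemma distDeriv_apply (T : SD →L[ℂ] ℂ) (φ : SD) :
    distDeriv T φ = -T (derivCLM ℂ ℂ φ) := rfl

/-- `distDeriv` as a `ℂ`-linear endomorphism of tempered distributions. -/
noncomputable def DD : Module.End ℂ (SD →L[ℂ] ℂ) where
  toFun := distDeriv
  map_add' T S := by
    show -((T + S).comp (derivCLM ℂ ℂ)) = -(T.comp (derivCLM ℂ ℂ)) + -(S.comp (derivCLM ℂ ℂ))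
    rw [ContinuousLinearMap.add_comp, neg_add]
  map_smul' c T := by
    show -((c • T).comp (derivCLM ℂ ℂ)) = c • -(T.comp (derivCLM ℂ ℂ))
    rw [ContinuousLinearMap.smul_comp, smul_neg]

lemma DD_apply (T : SD →L[ℂ] ℂ) : DD T = distDeriv T := rfl

/-! ### Translation of Schwartz functions -/

lemma htg_add_const (t : ℝ) : Function.HasTemperateGrowth (fun x : ℝ => x + t) := by
  apply Function.HasTemperateGrowth.of_fderiv (k := 1) (C := 1 + |t|)
  · have : (fderiv ℝ (fun x : ℝ => x + t)) = fun _ => ContinuousLinearMap.id ℝ ℝ := by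
      funext x
      rw [fderiv_add_const]
      exact fderiv_id'
    rw [this]
    exact Function.HasTemperateGrowth.const _
  · exact (differentiable_id).add_const t
  · intro x
    have h1 : ‖x + t‖ ≤ ‖x‖ + |t| := by
      simpa [Real.norm_eq_abs] using abs_add_le x t
    have h2 : (0:ℝ) ≤ |t| := abs_nonneg t
    have h3 : (0:ℝ) ≤ ‖x‖ := norm_nonneg x
    nlinarith

/-- Translation on Schwartz space: `trans t φ = φ (· + t)`. -/
noncomputable def trans (t : ℝ) : SD →L[ℂ] SD :=
  compCLMOfAntilipschitz ℂ (htg_add_const t)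
    (Isometry.antilipschitz (Isometry.of_dist_eq (fun a b => by simp [Real.dist_eq])))

@[simp] lemma trans_apply (t : ℝ) (φ : SD) (x : ℝ) : trans t φ x = φ (x + t) := rfl

lemma trans_coe (t : ℝ) (φ : SD) : ⇑(trans t φ) = fun x => φ (x + t) := rfl

lemma trans_trans (s t : ℝ) (φ : SD) : trans s (trans t φ) = trans (t + s) φ := by
  ext x
  simp [trans_apply, add_assoc, add_comm s t]

lemma trans_zero (φ : SD) : trans 0 φ = φ := by
  ext x; simp

lemma derivCLM_trans (t : ℝ) (φ : SD) :
    derivCLM ℂ ℂ (trans t φ) = trans t (derivCLM ℂ ℂ φ) := by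
  ext x
  simp only [derivCLM_apply, trans_apply, trans_coe]
  exact deriv_comp_add_const (⇑φ) t x

lemma tsupport_trans_subset {φ : SD} {a : ℝ} (h : tsupport ⇑φ ⊆ Set.Iio a) (t : ℝ) :
    tsupport ⇑(trans t φ) ⊆ Set.Iio (a - t) := by
  have hcomp : ⇑(trans t φ) = ⇑φ ∘ (fun x => x + t) := rfl
  intro x hx
  rw [hcomp] at hx
  have h1 : tsupport (⇑φ ∘ fun x => x + t) ⊆ (fun x : ℝ => x + t) ⁻¹' tsupport ⇑φ := by
    rw [tsupport, Function.support_comp_eq_preimage]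
    exact (continuous_id.add continuous_const).closure_preimage_subset _
  have h2 := h (h1 hx)
  simp only [Set.mem_Iio] at h2 ⊢
  linarith

/-! ### A continuity bound for tempered distributions -/

lemma exists_bound (T : SD →L[ℂ] ℂ) :
    ∃ (s : Finset (ℕ × ℕ)) (C : ℝ), 0 ≤ C ∧
      ∀ f : SD, ‖T f‖ ≤ C * (s.sup (schwartzSeminormFamily ℂ ℝ ℂ)) f := by
  have hq : Continuous ⇑((normSeminorm ℂ ℂ).comp (T : SD →ₗ[ℂ] ℂ)) := by
    simp only [Seminorm.coe_comp]
    exact continuous_norm.comp T.continuous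
  obtain ⟨s, C, -, h⟩ := Seminorm.bound_of_continuous (schwartz_withSeminorms ℂ ℝ ℂ) _ hq
  refine ⟨s, C, C.coe_nonneg, fun f => ?_⟩
  have := h f
  simpa [Seminorm.comp_apply, NNReal.smul_def, smul_eq_mul] using this

/-! ### A Taylor estimate -/

lemma taylor_bound {g g' g'' : ℝ → ℂ} (h1 : ∀ y, HasDerivAt g (g' y) y)
    (h2 : ∀ y, HasDerivAt g' (g'' y) y) {x ε M : ℝ}
    (hM : ∀ y ∈ Set.uIcc x (x + ε), ‖g'' y‖ ≤ M) :
    ‖g (x + ε) - g x - ε • g' x‖ ≤ M * ε ^ 2 := by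
  have hconv : Convex ℝ (Set.uIcc x (x + ε)) := convex_uIcc _ _
  have hMnonneg : 0 ≤ M := le_trans (norm_nonneg _) (hM x Set.left_mem_uIcc)
  have hdist : ∀ y ∈ Set.uIcc x (x + ε), ‖y - x‖ ≤ |ε| := by
    intro y hy
    rw [Set.mem_uIcc] at hy
    rw [Real.norm_eq_abs, abs_le]
    rcases hy with ⟨h1', h2'⟩ | ⟨h1', h2'⟩
    · constructor <;> nlinarith [le_abs_self ε, neg_abs_le ε]
    · constructor <;> nlinarith [le_abs_self ε, neg_abs_le ε]
  have step1 : ∀ y ∈ Set.uIcc x (x + ε), ‖g' y - g' x‖ ≤ M * |ε| := by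
    intro y hy
    have := Convex.norm_image_sub_le_of_norm_hasDerivWithin_le
      (fun z hz => (h2 z).hasDerivWithinAt) hM hconv Set.left_mem_uIcc hy
    refine le_trans this ?_
    exact mul_le_mul_of_nonneg_left (hdist y hy) hMnonneg
  have step2 : ∀ y ∈ Set.uIcc x (x + ε),
      HasDerivWithinAt (fun z => g z - z • g' x) (g' y - g' x) (Set.uIcc x (x + ε)) y := by
    intro y hy
    have ha : HasDerivAt (fun z : ℝ => z • g' x) ((1:ℝ) • g' x) y :=
      (hasDerivAt_id y).smul_const (g' x)
    rw [one_smul] at ha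
    exact ((h1 y).sub ha).hasDerivWithinAt
  have := Convex.norm_image_sub_le_of_norm_hasDerivWithin_le
    step2 step1 hconv Set.left_mem_uIcc (Set.right_mem_uIcc (a := x) (b := x + ε))
  have heq : (g (x + ε) - (x + ε) • g' x) - (g x - x • g' x)
      = g (x + ε) - g x - ε • g' x := by
    rw [add_smul]; abel
  rw [heq] at this
  refine le_trans this ?_
  have : ‖x + ε - x‖ = |ε| := by simp [Real.norm_eq_abs]
  rw [this]
  have : M * |ε| * |ε| = M * (|ε| * |ε|) := by ring
  rw [this, abs_mul_abs_self, sq]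

lemma schwartz_hasDerivAt (ψ : SD) (b : ℕ) (y : ℝ) :
    HasDerivAt (iteratedDeriv b ⇑ψ) (iteratedDeriv (b + 1) ⇑ψ y) y := by
  have hdiff : Differentiable ℝ (iteratedDeriv b ⇑ψ) := by
    apply ContDiff.differentiable_iteratedDeriv b (ψ.smooth ((b : ℕ∞) + 1))
    have h1 : (b : ℕ∞) < (b : ℕ∞) + 1 :=
      ENat.lt_add_one_iff (by simp) |>.mpr le_rfl
    exact_mod_cast h1
  have := (hdiff y).hasDerivAt
  rwa [iteratedDeriv_succ]

/-! ### The seminorm Taylor estimate for translations -/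

noncomputable def Mconst (a b : ℕ) (ψ : SD) : ℝ :=
  2 ^ a * ((Finset.Iic (a, b + 2)).sup (schwartzSeminormFamily ℂ ℝ ℂ)) ψ

lemma Mconst_nonneg (a b : ℕ) (ψ : SD) : 0 ≤ Mconst a b ψ := by
  unfold Mconst
  positivity

lemma abs_sub_le_of_mem_uIcc {x ε y : ℝ} (hy : y ∈ Set.uIcc x (x + ε)) : |y - x| ≤ |ε| := by
  rw [Set.mem_uIcc] at hy
  rw [abs_le]
  rcases hy with ⟨h1', h2'⟩ | ⟨h1', h2'⟩
  · constructor <;> nlinarith [le_abs_self ε, neg_abs_le ε]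
  · constructor <;> nlinarith [le_abs_self ε, neg_abs_le ε]

lemma seminorm_diff_le (a b : ℕ) (ψ : SD) {ε : ℝ} (hε : |ε| ≤ 1) :
    SchwartzMap.seminorm ℂ a b (trans ε ψ - ψ - ε • derivCLM ℂ ℂ ψ) ≤ Mconst a b ψ * ε ^ 2 := by
  apply SchwartzMap.seminorm_le_bound ℂ a b _ (mul_nonneg (Mconst_nonneg a b ψ) (sq_nonneg ε))
  intro x
  set f1 : ℝ → ℂ := fun y => ψ (y + ε) with hf1def
  have hcoe : ⇑(trans ε ψ - ψ - ε • derivCLM ℂ ℂ ψ)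
      = fun y => f1 y - ψ y - ε • (⇑(derivCLM ℂ ℂ ψ)) y := by
    funext y
    simp [SchwartzMap.sub_apply, SchwartzMap.smul_apply, hf1def]
  have hf1 : ContDiff ℝ b f1 := (ψ.smooth b).comp (contDiff_id.add contDiff_const)
  have hf2 : ContDiff ℝ b ⇑ψ := ψ.smooth b
  have hf3 : ContDiff ℝ b ⇑(derivCLM ℂ ℂ ψ) := (derivCLM ℂ ℂ ψ).smooth b
  -- iterated derivative decomposition
  have hFD : iteratedFDeriv ℝ b (fun y => f1 y - ψ y - ε • (⇑(derivCLM ℂ ℂ ψ)) y) x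
      = iteratedFDeriv ℝ b f1 x - iteratedFDeriv ℝ b ⇑ψ x
        - ε • iteratedFDeriv ℝ b ⇑(derivCLM ℂ ℂ ψ) x := by
    have hneg1 : iteratedFDeriv ℝ b (fun y => -(ε • (⇑(derivCLM ℂ ℂ ψ)) y)) x
        = -(ε • iteratedFDeriv ℝ b ⇑(derivCLM ℂ ℂ ψ) x) := by
      have h1 : (fun y => -(ε • (⇑(derivCLM ℂ ℂ ψ)) y)) = -(ε • ⇑(derivCLM ℂ ℂ ψ)) := by
        funext y; simp
      rw [h1, iteratedFDeriv_neg_apply, iteratedFDeriv_const_smul_apply hf3.contDiffAt]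
    have hneg2 : iteratedFDeriv ℝ b (fun y => -(ψ y)) x = -(iteratedFDeriv ℝ b ⇑ψ x) := by
      have h1 : (fun y => -(ψ y)) = -⇑ψ := by funext y; simp
      rw [h1, iteratedFDeriv_neg_apply]
    have e1 : (fun y => f1 y - ψ y - ε • (⇑(derivCLM ℂ ℂ ψ)) y)
        = fun y => (f1 y - ψ y) + -(ε • (⇑(derivCLM ℂ ℂ ψ)) y) := by
      funext y; simp [sub_eq_add_neg]
    rw [e1, iteratedFDeriv_add_apply' (hf1.sub hf2).contDiffAt ((hf3.const_smul ε).neg).contDiffAt, hneg1]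
    have e2 : (fun y => f1 y - ψ y) = fun y => f1 y + -(ψ y) := by
      funext y; simp [sub_eq_add_neg]
    rw [e2, iteratedFDeriv_add_apply' hf1.contDiffAt hf2.neg.contDiffAt, hneg2]
    abel
  have hID : iteratedDeriv b (⇑(trans ε ψ - ψ - ε • derivCLM ℂ ℂ ψ)) x
      = iteratedDeriv b ⇑ψ (x + ε) - iteratedDeriv b ⇑ψ x
        - ε • iteratedDeriv (b + 1) ⇑ψ x := by
    have hd3 : ⇑(derivCLM ℂ ℂ ψ) = deriv ⇑ψ := by funext y; rw [derivCLM_apply]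
    have hd1 : iteratedDeriv b f1 x = iteratedDeriv b ⇑ψ (x + ε) := by
      have := iteratedDeriv_comp_add_const b (⇑ψ) ε
      exact congrFun this x
    rw [iteratedDeriv_eq_iteratedFDeriv, hcoe, hFD]
    simp only [ContinuousMultilinearMap.sub_apply, ContinuousMultilinearMap.smul_apply]
    rw [← iteratedDeriv_eq_iteratedFDeriv, ← iteratedDeriv_eq_iteratedFDeriv,
      ← iteratedDeriv_eq_iteratedFDeriv, hd1, hd3, ← iteratedDeriv_succ']
  rw [norm_iteratedFDeriv_eq_norm_iteratedDeriv, hID]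
  -- scaled Taylor estimate
  set cst : ℝ := ‖x‖ ^ a with hcst
  have hcst0 : 0 ≤ cst := by positivity
  have hb := taylor_bound (g := fun y => cst • iteratedDeriv b ⇑ψ y)
      (g' := fun y => cst • iteratedDeriv (b + 1) ⇑ψ y)
      (g'' := fun y => cst • iteratedDeriv (b + 2) ⇑ψ y)
      (fun y => (schwartz_hasDerivAt ψ b y).const_smul cst)
      (fun y => (schwartz_hasDerivAt ψ (b + 1) y).const_smul cst)
      (x := x) (ε := ε) (M := Mconst a b ψ) ?_
  · have heq : cst • iteratedDeriv b ⇑ψ (x + ε) - cst • iteratedDeriv b ⇑ψ x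
        - ε • (cst • iteratedDeriv (b + 1) ⇑ψ x)
        = cst • (iteratedDeriv b ⇑ψ (x + ε) - iteratedDeriv b ⇑ψ x
            - ε • iteratedDeriv (b + 1) ⇑ψ x) := by
      rw [smul_comm ε cst, ← smul_sub, ← smul_sub]
    rw [heq, norm_smul, Real.norm_eq_abs, abs_of_nonneg hcst0] at hb
    exact hb
  · intro y hy
    have hxy : ‖x‖ ≤ 1 + ‖y‖ := by
      have h1 := abs_sub_le_of_mem_uIcc hy
      have : |x - y| ≤ 1 := by
        rw [abs_sub_comm]; exact le_trans h1 hε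
      calc ‖x‖ = |x| := rfl
        _ ≤ |y| + |x - y| := by
            have := abs_sub_abs_le_abs_sub x y
            nlinarith [abs_nonneg (x - y), le_abs_self (x - y)]
        _ ≤ 1 + ‖y‖ := by rw [Real.norm_eq_abs]; linarith
    have hpow : cst ≤ (1 + ‖y‖) ^ a := by
      rw [hcst]
      exact pow_le_pow_left₀ (norm_nonneg x) hxy a
    rw [norm_smul, Real.norm_eq_abs, abs_of_nonneg hcst0]
    calc cst * ‖iteratedDeriv (b + 2) ⇑ψ y‖
        ≤ (1 + ‖y‖) ^ a * ‖iteratedDeriv (b + 2) ⇑ψ y‖ :=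
          mul_le_mul_of_nonneg_right hpow (norm_nonneg _)
      _ = (1 + ‖y‖) ^ a * ‖iteratedFDeriv ℝ (b + 2) ⇑ψ y‖ := by
          rw [norm_iteratedFDeriv_eq_norm_iteratedDeriv]
      _ ≤ Mconst a b ψ :=
          SchwartzMap.one_add_le_sup_seminorm_apply (m := (a, b + 2)) le_rfl le_rfl ψ y

lemma hasDerivAt_trans (T : SD →L[ℂ] ℂ) (φ : SD) (t : ℝ) :
    HasDerivAt (fun s => T (trans s φ)) (T (trans t (derivCLM ℂ ℂ φ))) t := by
  obtain ⟨sFin, C, hC0, hT⟩ := exists_bound T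
  set ψ := trans t φ with hψ
  have hL : T (trans t (derivCLM ℂ ℂ φ)) = T (derivCLM ℂ ℂ ψ) := by rw [hψ, derivCLM_trans]
  rw [hL]
  set MM : ℝ := ∑ m ∈ sFin, Mconst m.1 m.2 ψ with hMM
  have hMM0 : 0 ≤ MM := Finset.sum_nonneg fun m _ => Mconst_nonneg m.1 m.2 ψ
  set K : ℝ := C * MM with hKdef
  have hK0 : 0 ≤ K := mul_nonneg hC0 hMM0
  have key : ∀ ε : ℝ, |ε| ≤ 1 →
      ‖T (trans (t + ε) φ) - T ψ - ε • T (derivCLM ℂ ℂ ψ)‖ ≤ K * ε ^ 2 := by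
    intro ε hε
    have htr : trans (t + ε) φ = trans ε ψ := (trans_trans ε t φ).symm
    have hsm : (ε • derivCLM ℂ ℂ ψ : SD) = (ε : ℂ) • derivCLM ℂ ℂ ψ :=
      (Complex.coe_smul ε _).symm
    have hTΔ : T (trans ε ψ - ψ - ε • derivCLM ℂ ℂ ψ)
        = T (trans (t + ε) φ) - T ψ - ε • T (derivCLM ℂ ℂ ψ) := by
      rw [map_sub, map_sub, hsm, map_smul, Complex.coe_smul, htr]
    rw [← hTΔ]
    refine le_trans (hT _) ?_
    have h2 : (sFin.sup (schwartzSeminormFamily ℂ ℝ ℂ)) (trans ε ψ - ψ - ε • derivCLM ℂ ℂ ψ)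
        ≤ MM * ε ^ 2 := by
      apply Seminorm.finset_sup_apply_le (mul_nonneg hMM0 (sq_nonneg ε))
      intro m hm
      obtain ⟨a, b⟩ := m
      refine le_trans (seminorm_diff_le a b ψ hε) ?_
      exact mul_le_mul_of_nonneg_right
        (Finset.single_le_sum (fun i _ => Mconst_nonneg i.1 i.2 ψ) hm) (sq_nonneg ε)
    calc C * (sFin.sup (schwartzSeminormFamily ℂ ℝ ℂ)) (trans ε ψ - ψ - ε • derivCLM ℂ ℂ ψ)
        ≤ C * (MM * ε ^ 2) := mul_le_mul_of_nonneg_left h2 hC0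
      _ = K * ε ^ 2 := by rw [hKdef]; ring
  rw [hasDerivAt_iff_isLittleO, Asymptotics.isLittleO_iff]
  intro c hc
  have hδ : 0 < min 1 (c / (K + 1)) := lt_min one_pos (div_pos hc (by linarith))
  filter_upwards [Metric.ball_mem_nhds t hδ] with x' hx'
  rw [Metric.mem_ball, Real.dist_eq] at hx'
  have hε1 : |x' - t| ≤ 1 := le_of_lt (lt_of_lt_of_le hx' (min_le_left _ _))
  have hε2 : |x' - t| ≤ c / (K + 1) := le_of_lt (lt_of_lt_of_le hx' (min_le_right _ _))
  have hx'' : x' = t + (x' - t) := by ring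
  have hcK : K * |x' - t| ≤ c := by
    have h3 : K * |x' - t| ≤ K * (c / (K + 1)) := mul_le_mul_of_nonneg_left hε2 hK0
    have h4 : K * (c / (K + 1)) ≤ c := by
      have h5 : K * (c / (K + 1)) = c * (K / (K + 1)) := by ring
      rw [h5]
      have h6 : K / (K + 1) ≤ 1 := by
        rw [div_le_one (by linarith)]; linarith
      calc c * (K / (K + 1)) ≤ c * 1 := mul_le_mul_of_nonneg_left h6 hc.le
        _ = c := mul_one c
    linarith
  calc ‖T (trans x' φ) - T (trans t φ) - (x' - t) • T (derivCLM ℂ ℂ ψ)‖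
      = ‖T (trans (t + (x' - t)) φ) - T ψ - (x' - t) • T (derivCLM ℂ ℂ ψ)‖ := by
        rw [← hx'', ← hψ]
    _ ≤ K * (x' - t) ^ 2 := key (x' - t) hε1
    _ = (K * |x' - t|) * |x' - t| := by
        have habs : |x' - t| * |x' - t| = (x' - t) ^ 2 := by
          rw [abs_mul_abs_self, sq]
        calc K * (x' - t) ^ 2 = K * (|x' - t| * |x' - t|) := by rw [habs]
          _ = (K * |x' - t|) * |x' - t| := by ring
    _ ≤ c * |x' - t| := mul_le_mul_of_nonneg_right hcK (abs_nonneg _)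
    _ = c * ‖x' - t‖ := by rw [Real.norm_eq_abs]

/-! ### First order equation with vanishing past -/

lemma trans_vanish (T : SD →L[ℂ] ℂ) (z : ℂ) (hT1 : DD T = z • T)
    (hpa : ∀ φ : SD, tsupport ⇑φ ⊆ Set.Iio 0 → T φ = 0)
    (φ : SD) (hφ : tsupport ⇑φ ⊆ Set.Iio 0) : ∀ t : ℝ, T (trans t φ) = 0 := by
  have hder : ∀ ψ : SD, T (derivCLM ℂ ℂ ψ) = -(z * T ψ) := by
    intro ψ
    have h1 : distDeriv T ψ = (z • T) ψ := by rw [← DD_apply, hT1]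
    rw [distDeriv_apply] at h1
    have h2 : (z • T) ψ = z * T ψ := rfl
    rw [h2] at h1
    linear_combination -h1
  have hode : ∀ t : ℝ, HasDerivAt (fun s => T (trans s φ)) (-(z * T (trans t φ))) t := by
    intro t
    have h := hasDerivAt_trans T φ t
    have h2 : T (trans t (derivCLM ℂ ℂ φ)) = -(z * T (trans t φ)) := by
      rw [← derivCLM_trans]; exact hder (trans t φ)
    rwa [h2] at h
  have hu : ∀ t : ℝ, HasDerivAt (fun s : ℝ => Complex.exp (z * s) * T (trans s φ)) 0 t := by
    intro t
    have hlin : HasDerivAt (fun s : ℝ => z * (s : ℂ)) z t := by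
      have h0 : HasDerivAt (fun s : ℝ => (s : ℂ)) 1 t := by
        exact Complex.ofRealCLM.hasDerivAt (x := t)
      simpa using h0.const_mul z
    have he : HasDerivAt (fun s : ℝ => Complex.exp (z * s)) (Complex.exp (z * t) * z) t :=
      hlin.cexp
    have hmul := he.mul (hode t)
    convert hmul using 1
    · rfl
    · rfl
    · ring
  have hconst := is_const_of_deriv_eq_zero (𝕜 := ℝ)
    (fun t => (hu t).differentiableAt) (fun t => (hu t).deriv)
  intro t
  have h0 : T (trans 0 φ) = 0 := by rw [trans_zero]; exact hpa φ hφ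
  have hct := hconst t 0
  rw [h0] at hct
  simp only [Complex.ofReal_zero, mul_zero, Complex.exp_zero] at hct
  exact (mul_eq_zero.mp hct).resolve_left (Complex.exp_ne_zero _)

lemma past_all (T : SD →L[ℂ] ℂ) (z : ℂ) (hT1 : DD T = z • T)
    (hpa : ∀ φ : SD, tsupport ⇑φ ⊆ Set.Iio 0 → T φ = 0) :
    ∀ (a : ℝ) (φ : SD), tsupport ⇑φ ⊆ Set.Iio a → T φ = 0 := by
  intro a φ hφ
  have h1 : tsupport ⇑(trans a φ) ⊆ Set.Iio 0 := by
    have := tsupport_trans_subset hφ a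
    simpa using this
  have h2 := trans_vanish T z hT1 hpa (trans a φ) h1 (-a)
  rw [trans_trans] at h2
  have h3 : a + -a = 0 := by ring
  rw [h3, trans_zero] at h2
  exact h2

/-! ### Cutoffs and density -/

noncomputable def zC : ℝ → ℂ := fun x => (Real.smoothTransition x : ℂ)

lemma zC_smooth : ContDiff ℝ ∞ zC :=
  Complex.ofRealCLM.contDiff.comp Real.smoothTransition.contDiff

lemma zeta_bound (i : ℕ) : ∃ B : ℝ, 0 ≤ B ∧ ∀ y : ℝ, ‖iteratedDeriv i zC y‖ ≤ B := by
  rcases Nat.eq_zero_or_pos i with hi | hi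
  · refine ⟨1, zero_le_one, fun y => ?_⟩
    subst hi
    rw [iteratedDeriv_zero]
    have : ‖zC y‖ = |Real.smoothTransition y| := by
      simp [zC]
    rw [this, abs_of_nonneg (Real.smoothTransition.nonneg y)]
    exact Real.smoothTransition.le_one y
  · have hcont : Continuous fun y => iteratedDeriv i zC y :=
      zC_smooth.continuous_iteratedDeriv i (by exact_mod_cast (le_top : (i:ℕ∞) ≤ ⊤))
    obtain ⟨C0, hC0⟩ := (isCompact_Icc (a := (-1:ℝ)) (b := 2)).exists_bound_of_continuousOn
      hcont.continuousOn
    refine ⟨max C0 0, le_max_right _ _, fun y => ?_⟩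
    by_cases hy : y ∈ Set.Icc (-1:ℝ) 2
    · exact le_trans (hC0 y hy) (le_max_left _ _)
    · rw [Set.mem_Icc, not_and_or, not_le, not_le] at hy
      have hev : ∃ cc : ℂ, zC =ᶠ[nhds y] fun _ => cc := by
        rcases hy with hy | hy
        · refine ⟨0, ?_⟩
          filter_upwards [Iio_mem_nhds (show y < 0 by linarith)] with w hw
          rw [Set.mem_Iio] at hw
          simp [zC, Real.smoothTransition.zero_of_nonpos hw.le]
        · refine ⟨1, ?_⟩
          filter_upwards [Ioi_mem_nhds (show (1:ℝ) < y by linarith)] with w hw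
          rw [Set.mem_Ioi] at hw
          simp [zC, Real.smoothTransition.one_of_one_le hw.le]
      obtain ⟨cc, hev⟩ := hev
      rw [hev.iteratedDeriv_eq i, ← norm_iteratedFDeriv_eq_norm_iteratedDeriv,
        iteratedFDeriv_const_of_ne hi.ne']
      simp only [Pi.zero_apply, norm_zero]
      exact le_max_right _ _

lemma zeta_bound_all (b : ℕ) :
    ∃ B : ℝ, 0 ≤ B ∧ ∀ i ≤ b, ∀ y : ℝ, ‖iteratedDeriv i zC y‖ ≤ B := by
  induction b with
  | zero =>
    obtain ⟨B, hB0, hB⟩ := zeta_bound 0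
    exact ⟨B, hB0, fun i hi y => by rw [Nat.le_zero.mp hi]; exact hB y⟩
  | succ b ih =>
    obtain ⟨B1, h10, h1⟩ := ih
    obtain ⟨B2, h20, h2⟩ := zeta_bound (b + 1)
    refine ⟨max B1 B2, le_trans h10 (le_max_left _ _), fun i hi y => ?_⟩
    rcases eq_or_lt_of_le hi with rfl | hlt
    · exact le_trans (h2 y) (le_max_right _ _)
    · exact le_trans (h1 i (Nat.lt_succ_iff.mp hlt) y) (le_max_left _ _)

lemma zeta_shift_bound (b : ℕ) : ∃ B : ℝ, 0 ≤ B ∧ ∀ (R : ℝ) (i : ℕ), i ≤ b → ∀ x : ℝ,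
    ‖iteratedFDeriv ℝ i (fun w => zC (w - R)) x‖ ≤ B := by
  obtain ⟨B, hB0, hB⟩ := zeta_bound_all b
  refine ⟨B, hB0, fun R i hi x => ?_⟩
  rw [norm_iteratedFDeriv_eq_norm_iteratedDeriv]
  have hfun : (fun w : ℝ => zC (w - R)) = fun w => zC (w + -R) := by
    funext w; rw [sub_eq_add_neg]
  have hc := congrFun (iteratedDeriv_comp_add_const i zC (-R)) x
  rw [hfun, hc]
  exact hB i hi _

lemma htg_zeta_shift (R : ℝ) : Function.HasTemperateGrowth fun w : ℝ => zC (w - R) := by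
  refine ⟨zC_smooth.comp (contDiff_id.sub contDiff_const), fun n => ?_⟩
  obtain ⟨B, hB0, hB⟩ := zeta_shift_bound n
  exact ⟨0, B, fun x => by simpa using hB R n le_rfl x⟩

/-- Multiplication by the shifted cutoff. -/
noncomputable def cutMul (R : ℝ) : SD →L[ℝ] SD :=
  bilinLeftCLM (ContinuousLinearMap.mul ℝ ℂ) (htg_zeta_shift R)

lemma cutMul_apply (R : ℝ) (φ : SD) (x : ℝ) : cutMul R φ x = φ x * zC (x - R) := rfl

lemma cut_seminorm (φ : SD) (a b : ℕ) : ∃ Kab : ℝ, 0 ≤ Kab ∧ ∀ R : ℝ, 1 ≤ R →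
    SchwartzMap.seminorm ℂ a b (cutMul R φ) ≤ Kab / R := by
  obtain ⟨B, hB0, hB⟩ := zeta_shift_bound b
  set K : ℝ := (∑ i ∈ Finset.range (b + 1),
      (b.choose i : ℝ) * SchwartzMap.seminorm ℂ (a + 1) i φ) * B with hKdef
  have hsum0 : 0 ≤ ∑ i ∈ Finset.range (b + 1),
      (b.choose i : ℝ) * SchwartzMap.seminorm ℂ (a + 1) i φ :=
    Finset.sum_nonneg fun i _ => mul_nonneg (Nat.cast_nonneg _) (apply_nonneg _ _)
  have hK0 : 0 ≤ K := mul_nonneg hsum0 hB0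
  refine ⟨K, hK0, fun R hR => ?_⟩
  have hRpos : (0:ℝ) < R := lt_of_lt_of_le one_pos hR
  apply SchwartzMap.seminorm_le_bound ℂ a b _ (div_nonneg hK0 hRpos.le)
  intro x
  by_cases hx : x < R
  · have hev : ⇑(cutMul R φ) =ᶠ[nhds x] fun _ => (0:ℂ) := by
      filter_upwards [Iio_mem_nhds hx] with w hw
      rw [Set.mem_Iio] at hw
      have hz : zC (w - R) = 0 := by
        simp [zC, Real.smoothTransition.zero_of_nonpos (by linarith : w - R ≤ 0)]
      simp [cutMul_apply, hz]
    rw [norm_iteratedFDeriv_eq_norm_iteratedDeriv, hev.iteratedDeriv_eq b,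
      ← norm_iteratedFDeriv_eq_norm_iteratedDeriv]
    have hzf : (fun _ : ℝ => (0:ℂ)) = (fun _ : ℝ => (0:ℂ)) := rfl
    rw [iteratedFDeriv_zero_fun]
    simp only [Pi.zero_apply, norm_zero, mul_zero]
    exact div_nonneg hK0 hRpos.le
  · push_neg at hx
    have hx1 : (1:ℝ) ≤ x := le_trans hR hx
    have hxpos : (0:ℝ) < x := by linarith
    have hxnorm : ‖x‖ = x := by rw [Real.norm_eq_abs, abs_of_pos hxpos]
    have hmul := norm_iteratedFDeriv_mul_le (𝕜 := ℝ) (A := ℂ) (N := ∞)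
      (f := ⇑φ) (g := fun w => zC (w - R)) (φ.smooth') (htg_zeta_shift R).1 x
      (n := b) (by exact_mod_cast (le_top : (b:ℕ∞) ≤ ⊤))
    have hcoe : ⇑(cutMul R φ) = fun y => φ y * zC (y - R) := rfl
    rw [hcoe]
    have hstep : ∀ i ∈ Finset.range (b + 1),
        ‖x‖ ^ a * ((b.choose i : ℝ) * ‖iteratedFDeriv ℝ i (⇑φ) x‖
          * ‖iteratedFDeriv ℝ (b - i) (fun w => zC (w - R)) x‖)
        ≤ ((b.choose i : ℝ) * SchwartzMap.seminorm ℂ (a + 1) i φ) * B / R := by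
      intro i hi
      have hφ1 : ‖x‖ ^ a * ‖iteratedFDeriv ℝ i (⇑φ) x‖
          ≤ SchwartzMap.seminorm ℂ (a + 1) i φ / R := by
        rw [le_div_iff₀ hRpos]
        calc ‖x‖ ^ a * ‖iteratedFDeriv ℝ i (⇑φ) x‖ * R
            ≤ ‖x‖ ^ a * ‖iteratedFDeriv ℝ i (⇑φ) x‖ * ‖x‖ := by
              apply mul_le_mul_of_nonneg_left _ (by positivity)
              rw [hxnorm]; exact hx
          _ = ‖x‖ ^ (a + 1) * ‖iteratedFDeriv ℝ i (⇑φ) x‖ := by ring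
          _ ≤ SchwartzMap.seminorm ℂ (a + 1) i φ := SchwartzMap.le_seminorm ℂ (a + 1) i φ x
      have hζ : ‖iteratedFDeriv ℝ (b - i) (fun w => zC (w - R)) x‖ ≤ B :=
        hB R (b - i) (Nat.sub_le _ _) x
      calc ‖x‖ ^ a * ((b.choose i : ℝ) * ‖iteratedFDeriv ℝ i (⇑φ) x‖
            * ‖iteratedFDeriv ℝ (b - i) (fun w => zC (w - R)) x‖)
          = (b.choose i : ℝ) * (‖x‖ ^ a * ‖iteratedFDeriv ℝ i (⇑φ) x‖)
            * ‖iteratedFDeriv ℝ (b - i) (fun w => zC (w - R)) x‖ := by ring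
        _ ≤ (b.choose i : ℝ) * (SchwartzMap.seminorm ℂ (a + 1) i φ / R) * B := by
            apply mul_le_mul
            · exact mul_le_mul_of_nonneg_left hφ1 (Nat.cast_nonneg _)
            · exact hζ
            · exact norm_nonneg _
            · positivity
        _ = ((b.choose i : ℝ) * SchwartzMap.seminorm ℂ (a + 1) i φ) * B / R := by ring
    calc ‖x‖ ^ a * ‖iteratedFDeriv ℝ b (fun y => φ y * zC (y - R)) x‖
        ≤ ‖x‖ ^ a * ∑ i ∈ Finset.range (b + 1), (b.choose i : ℝ)
          * ‖iteratedFDeriv ℝ i (⇑φ) x‖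
          * ‖iteratedFDeriv ℝ (b - i) (fun w => zC (w - R)) x‖ := by
          apply mul_le_mul_of_nonneg_left _ (by positivity)
          exact hmul
      _ = ∑ i ∈ Finset.range (b + 1), ‖x‖ ^ a * ((b.choose i : ℝ)
          * ‖iteratedFDeriv ℝ i (⇑φ) x‖
          * ‖iteratedFDeriv ℝ (b - i) (fun w => zC (w - R)) x‖) := by
          rw [Finset.mul_sum]
      _ ≤ ∑ i ∈ Finset.range (b + 1),
          ((b.choose i : ℝ) * SchwartzMap.seminorm ℂ (a + 1) i φ) * B / R :=
          Finset.sum_le_sum hstep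
      _ = K / R := by rw [hKdef, ← Finset.sum_div, ← Finset.sum_mul]

lemma density (T : SD →L[ℂ] ℂ)
    (h : ∀ (a : ℝ) (φ : SD), tsupport ⇑φ ⊆ Set.Iio a → T φ = 0) : T = 0 := by
  ext φ
  rw [ContinuousLinearMap.zero_apply]
  obtain ⟨sFin, C, hC0, hT⟩ := exists_bound T
  have hsplit : ∀ R : ℝ, T φ = T (cutMul R φ) := by
    intro R
    have hsupp0 : Function.support ⇑(φ - cutMul R φ) ⊆ Set.Iic (R + 1) := by
      intro x hx
      rw [Function.mem_support] at hx
      by_contra hgt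
      rw [Set.mem_Iic, not_le] at hgt
      apply hx
      have h1 : zC (x - R) = 1 := by
        simp [zC, Real.smoothTransition.one_of_one_le (by linarith : (1:ℝ) ≤ x - R)]
      simp [SchwartzMap.sub_apply, cutMul_apply, h1]
    have hsupp : tsupport ⇑(φ - cutMul R φ) ⊆ Set.Iio (R + 2) := by
      refine le_trans (closure_minimal hsupp0 isClosed_Iic) ?_
      intro x hx
      rw [Set.mem_Iic] at hx
      rw [Set.mem_Iio]
      linarith
    have h0 := h (R + 2) _ hsupp
    rw [map_sub] at h0
    linear_combination h0
  have hKex : ∀ m : ℕ × ℕ, ∃ Kab : ℝ, 0 ≤ Kab ∧ ∀ R : ℝ, 1 ≤ R →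
      SchwartzMap.seminorm ℂ m.1 m.2 (cutMul R φ) ≤ Kab / R :=
    fun m => cut_seminorm φ m.1 m.2
  choose Kf hKf0 hKf using hKex
  set KK : ℝ := C * ∑ m ∈ sFin, Kf m with hKKdef
  have hsum0 : 0 ≤ ∑ m ∈ sFin, Kf m := Finset.sum_nonneg fun m _ => hKf0 m
  have hbound : ∀ R : ℝ, 1 ≤ R → ‖T φ‖ ≤ KK / R := by
    intro R hR
    have hRpos : (0:ℝ) < R := lt_of_lt_of_le one_pos hR
    rw [hsplit R]
    refine le_trans (hT _) ?_
    have hsup : (sFin.sup (schwartzSeminormFamily ℂ ℝ ℂ)) (cutMul R φ)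
        ≤ (∑ m ∈ sFin, Kf m) / R := by
      apply Seminorm.finset_sup_apply_le (div_nonneg hsum0 hRpos.le)
      intro m hm
      refine le_trans (hKf m R hR) ?_
      gcongr
      exact Finset.single_le_sum (fun i _ => hKf0 i) hm
    calc C * (sFin.sup (schwartzSeminormFamily ℂ ℝ ℂ)) (cutMul R φ)
        ≤ C * ((∑ m ∈ sFin, Kf m) / R) := mul_le_mul_of_nonneg_left hsup hC0
      _ = KK / R := by rw [hKKdef]; ring
  by_contra hne
  have hpos : 0 < ‖T φ‖ := norm_pos_iff.mpr hne
  set R0 : ℝ := max 1 ((KK + 1) / ‖T φ‖) with hR0def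
  have hR01 : 1 ≤ R0 := le_max_left _ _
  have h1 := hbound R0 hR01
  have hR0pos : (0:ℝ) < R0 := lt_of_lt_of_le one_pos hR01
  rw [le_div_iff₀ hR0pos] at h1
  have h2 : (KK + 1) / ‖T φ‖ ≤ R0 := le_max_right _ _
  have h3 : ‖T φ‖ * ((KK + 1) / ‖T φ‖) = KK + 1 := by
    rw [mul_comm, div_mul_cancel₀ _ hpos.ne']
  nlinarith [mul_le_mul_of_nonneg_left h2 hpos.le]

end TempAux

theorem tempered_ode_null_solution_trivial (n : ℕ) (c : Fin (n + 1) → ℂ)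
    (hc : ∃ k, c k ≠ 0) (T : SchwartzMap ℝ ℂ →L[ℂ] ℂ)
    (hode : ∑ k : Fin (n + 1), c k • (distDeriv^[(k : ℕ)] T) = 0)
    (hpast : ∀ φ : SchwartzMap ℝ ℂ, tsupport (φ : ℝ → ℂ) ⊆ Set.Iio 0 → T φ = 0) :
    T = 0 := by
  classical
  open Polynomial in
  set P : Polynomial ℂ := ∑ k : Fin (n + 1), Polynomial.C (c k) * Polynomial.X ^ (k : ℕ)
    with hP
  have hPne : P ≠ 0 := by
    obtain ⟨k0, hk0⟩ := hc
    intro h0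
    apply hk0
    have hco := congrArg (fun p => Polynomial.coeff p (k0 : ℕ)) h0
    simp only [hP, Polynomial.finset_sum_coeff, Polynomial.coeff_C_mul,
      Polynomial.coeff_X_pow, Polynomial.coeff_zero, mul_ite, mul_one, mul_zero] at hco
    rw [Finset.sum_eq_single k0] at hco
    · simpa using hco
    · intro k _ hkne
      have hne : ((k0 : ℕ) : ℕ) ≠ (k : ℕ) := by
        intro hsame
        exact hkne (Fin.ext hsame.symm)
      simp [hne]
    · intro hk0mem
      exact absurd (Finset.mem_univ k0) hk0mem
  have haeval : Polynomial.aeval TempAux.DD P T = 0 := by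
    have h1 : Polynomial.aeval TempAux.DD P
        = ∑ k : Fin (n + 1), c k • (TempAux.DD ^ (k : ℕ)) := by
      rw [hP, map_sum]
      apply Finset.sum_congr rfl
      intro k _
      rw [map_mul, Polynomial.aeval_C, Polynomial.aeval_X_pow, Algebra.smul_def]
    have h2 : (∑ k : Fin (n + 1), c k • (TempAux.DD ^ (k : ℕ))) T
        = ∑ k : Fin (n + 1), c k • (distDeriv^[(k : ℕ)] T) := by
      rw [LinearMap.sum_apply]
      apply Finset.sum_congr rfl
      intro k _
      rw [LinearMap.smul_apply, Module.End.pow_apply]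
      rfl
    rw [h1, h2]
    exact hode
  suffices H : ∀ N : ℕ, ∀ Q : Polynomial ℂ, Q.natDegree ≤ N → Q ≠ 0 →
      ∀ S : SchwartzMap ℝ ℂ →L[ℂ] ℂ, Polynomial.aeval TempAux.DD Q S = 0 →
      (∀ φ : SchwartzMap ℝ ℂ, tsupport (φ : ℝ → ℂ) ⊆ Set.Iio 0 → S φ = 0) → S = 0 by
    exact H P.natDegree P le_rfl hPne T haeval hpast
  intro N
  induction N with
  | zero =>
    intro Q hdeg hQ S hS hpa
    obtain ⟨q, hq⟩ := Polynomial.natDegree_eq_zero.mp (Nat.le_zero.mp hdeg)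
    have hqne : q ≠ 0 := by
      rintro rfl
      rw [map_zero] at hq
      exact hQ hq.symm
    rw [← hq, Polynomial.aeval_C, Module.algebraMap_end_apply] at hS
    exact (smul_eq_zero.mp hS).resolve_left hqne
  | succ N ih =>
    intro Q hdeg hQ S hS hpa
    rcases Nat.eq_zero_or_pos Q.natDegree with h0 | hposdeg
    · exact ih Q (by omega) hQ S hS hpa
    · have hdegpos : 0 < Q.degree := Polynomial.natDegree_pos_iff_degree_pos.mp hposdeg
      obtain ⟨z, hz⟩ := Complex.exists_root hdegpos
      obtain ⟨Q1, hQ1⟩ := Polynomial.dvd_iff_isRoot.mpr hz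
      have hQ1ne : Q1 ≠ 0 := by
        rintro rfl
        rw [mul_zero] at hQ1
        exact hQ hQ1
      have hdeg1 : Q1.natDegree ≤ N := by
        have hmul := Polynomial.natDegree_mul (Polynomial.X_sub_C_ne_zero z) hQ1ne
        rw [← hQ1, Polynomial.natDegree_X_sub_C] at hmul
        omega
      set S1 : SchwartzMap ℝ ℂ →L[ℂ] ℂ := TempAux.DD S - z • S with hS1def
      have hS1ode : Polynomial.aeval TempAux.DD Q1 S1 = 0 := by
        have hcomm : Q = Q1 * (Polynomial.X - Polynomial.C z) := by rw [hQ1, mul_comm]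
        rw [hcomm, map_mul, Module.End.mul_apply] at hS
        have hXz : Polynomial.aeval TempAux.DD (Polynomial.X - Polynomial.C z) S = S1 := by
          rw [map_sub, Polynomial.aeval_X, Polynomial.aeval_C, LinearMap.sub_apply,
            Module.algebraMap_end_apply, hS1def]
        rwa [hXz] at hS
      have hS1past : ∀ φ : SchwartzMap ℝ ℂ, tsupport (φ : ℝ → ℂ) ⊆ Set.Iio 0 → S1 φ = 0 := by
        intro φ hφ
        have hcoe : ⇑(SchwartzMap.derivCLM ℂ ℂ φ) = deriv ⇑φ := by
          funext y; rw [SchwartzMap.derivCLM_apply]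
        have hd : tsupport (⇑(SchwartzMap.derivCLM ℂ ℂ φ)) ⊆ Set.Iio 0 := by
          rw [hcoe]
          have hsub : tsupport (deriv ⇑φ) ⊆ tsupport ⇑φ :=
            closure_minimal support_deriv_subset (isClosed_tsupport _)
          exact hsub.trans hφ
        rw [hS1def]
        simp only [ContinuousLinearMap.sub_apply, ContinuousLinearMap.smul_apply]
        rw [TempAux.DD_apply, TempAux.distDeriv_apply, hpa _ hd, hpa _ hφ]
        simp
      have hS1zero : S1 = 0 := ih Q1 hdeg1 hQ1ne S1 hS1ode hS1past
      have hDD : TempAux.DD S = z • S := by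
        rw [hS1def] at hS1zero
        rwa [sub_eq_zero] at hS1zero
      exact TempAux.density S (TempAux.past_all S z hDD hpa)
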